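/- For any complex channel h and MRT precoder w_m = α h_m^* with α = 1/√(∑|h_{m'}|^2), the third-order distortion term at the receiver, ∑_m h_m w_m |w_m|^2, equals α^3 ∑_m |h_m|^4, which is real, positive (when h ≠ 0), and in phase with the linear term α ∑_m |h_m|^2; hence the distortion combines coherently with the signal. -/

import Mathlib

theorem mrt_distortion_coherent (M : ℕ) (h : Fin M → ℂ) (hne : h ≠ 0)
    (α : ℝ) (hα : α = 1 / Real.sqrt (∑ m', ‖h m'‖ ^ 2))
    (w : Fin M → ℂ) (hw : ∀ m, w m = (α : ℂ) * (starRingEnd ℂ) (h m)) :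
    (∑ m, h m * w m * (‖w m‖ : ℂ) ^ 2 =
        ((α ^ 3 * ∑ m, ‖h m‖ ^ 4 : ℝ) : ℂ)) ∧
    0 < α ^ 3 * ∑ m, ‖h m‖ ^ 4 ∧
    (∑ m, h m * w m = ((α * ∑ m, ‖h m‖ ^ 2 : ℝ) : ℂ)) ∧
    0 < α * ∑ m, ‖h m‖ ^ 2 := by
  obtain ⟨m0, hm0⟩ : ∃ m, h m ≠ 0 := by
    by_contra hc
    push_neg at hc
    exact hne (funext hc)
  have hs2 : 0 < ∑ m, ‖h m‖ ^ 2 :=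
    Finset.sum_pos' (fun i _ => by positivity) ⟨m0, Finset.mem_univ m0, by
      have := norm_pos_iff.mpr hm0; positivity⟩
  have hs4 : 0 < ∑ m, ‖h m‖ ^ 4 :=
    Finset.sum_pos' (fun i _ => by positivity) ⟨m0, Finset.mem_univ m0, by
      have := norm_pos_iff.mpr hm0; positivity⟩
  have hαpos : 0 < α := by
    rw [hα]; positivity
  have habs : ∀ m, ‖w m‖ = α * ‖h m‖ := by
    intro m
    rw [hw m, norm_mul, Complex.norm_conj, Complex.norm_real, Real.norm_of_nonneg hαpos.le]
  have hhw : ∀ m, h m * w m = ((α * ‖h m‖ ^ 2 : ℝ) : ℂ) := by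
    intro m
    rw [hw m]
    rw [show h m * ((α : ℂ) * (starRingEnd ℂ) (h m)) = (α : ℂ) * (h m * (starRingEnd ℂ) (h m)) by ring,
      Complex.mul_conj, ← Complex.sq_norm]
    push_cast
    ring
  refine ⟨?_, by positivity, ?_, by positivity⟩
  · calc ∑ m, h m * w m * (‖w m‖ : ℂ) ^ 2
        = ∑ m, ((α ^ 3 * ‖h m‖ ^ 4 : ℝ) : ℂ) := by
          refine Finset.sum_congr rfl fun m _ => ?_
          rw [hhw m, habs m]
          push_cast
          ring
      _ = ((α ^ 3 * ∑ m, ‖h m‖ ^ 4 : ℝ) : ℂ) := by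
          push_cast
          rw [Finset.mul_sum]
  · calc ∑ m, h m * w m = ∑ m, ((α * ‖h m‖ ^ 2 : ℝ) : ℂ) :=
          Finset.sum_congr rfl fun m _ => hhw m
      _ = _ := by push_cast; rw [Finset.mul_sum]
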